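/- Let TR be the Tribonacci word, the fixed point of φ: 0↦01, 1↦02, 2↦0, and let f be the morphism 0↦10, 1↦0, 2↦1. Then f(TR) = π(TR), where π: 0↦100, 1↦101, 2↦10; equivalently, applying f to TR yields the same infinite binary word as applying π to TR. -/

import Mathlib

def phiM : Fin 3 → List (Fin 3) := ![[0, 1], [0, 2], [0]]
def fM : Fin 3 → List (Fin 2) := ![[1, 0], [0], [1]]
def piM : Fin 3 → List (Fin 2) := ![[1, 0, 0], [1, 0, 1], [1, 0]]

/-- The prefix of length `n` of an infinite word `u`. -/
def pref {α : Type*} (u : ℕ → α) (n : ℕ) : List α := (List.range n).map u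

lemma pref_prefix {α : Type*} (u : ℕ → α) {m n : ℕ} (h : m ≤ n) :
    pref u m <+: pref u n := by
  refine ⟨(List.range' m (n - m)).map u, ?_⟩
  unfold pref
  rw [← List.map_append]
  congr 1
  rw [List.range_eq_range', List.range_eq_range']
  have := @List.range'_append 0 m (n - m) 1
  simp only [Nat.zero_add, Nat.one_mul] at this
  rw [this]; congr 1; omega

lemma flatMap_prefix {α β : Type*} (g : α → List β) {l l' : List α}
    (h : l <+: l') : l.flatMap g <+: l'.flatMap g := by
  obtain ⟨t, rfl⟩ := h
  exact ⟨t.flatMap g, (List.flatMap_append ..).symm⟩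

lemma key (w : List (Fin 3)) : (w.flatMap phiM).flatMap fM = w.flatMap piM := by
  induction w with
  | nil => rfl
  | cons a w ih =>
    rw [List.flatMap_cons, List.flatMap_append, ih, List.flatMap_cons]
    congr 1
    fin_cases a <;> rfl

theorem stmt_11 (TR : ℕ → Fin 3)
    (h0 : TR 0 = 0)
    (hfix : ∀ n : ℕ,
      (pref TR n).flatMap phiM = pref TR ((pref TR n).flatMap phiM).length) :
    ∀ m n : ℕ,
      (pref TR m).flatMap fM <+: (pref TR n).flatMap piM ∨
      (pref TR n).flatMap piM <+: (pref TR m).flatMap fM := by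
  intro m n
  have hpi : (pref TR n).flatMap piM
      = (pref TR ((pref TR n).flatMap phiM).length).flatMap fM := by
    rw [← hfix n, key]
  rw [hpi]
  rcases le_total m ((pref TR n).flatMap phiM).length with h | h
  · exact Or.inl (flatMap_prefix fM (pref_prefix TR h))
  · exact Or.inr (flatMap_prefix fM (pref_prefix TR h))
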